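/- The longest repeating suffix grows by at most one character per appended character: let T' = (T_1, …, T_K) be a collection, a ∈ Σ, 1 ≤ k ≤ K, and let T be the collection obtained from T' by replacing T_k with T_k·[a]. If w is a nonempty string such that w·[a] is a suffix of T_k·[a] and |Epos_T(w·[a])| ≥ 2, then w is a suffix of T_k and |Epos_{T'}(w)| ≥ 2. Consequently, the length of the longest suffix of T_k·[a] occurring at least twice in T is at most one more than the length of the longest suffix of T_k occurring at least twice in T' (i.e., |lrs_T(T_k·[a])| ≤ |lrs_{T'}(T_k)| + 1). -/

import Mathlib

/-- The set of ending positions of occurrences of the nonempty string `x`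
in the collection `T = (T_1, …, T_K)`. -/
def Epos {α : Type*} {K : ℕ} (T : Fin K → List α) (x : List α) : Set (Fin K × ℕ) :=
  {p | x.length ≤ p.2 ∧ p.2 ≤ (T p.1).length ∧
       ((T p.1).take p.2).drop (p.2 - x.length) = x}

/-- The length of `lrs_T(S)`, the longest suffix of `S` occurring at least
twice in `T` (the empty suffix always counts as repeating). -/
noncomputable def lrsLen {α : Type*} {K : ℕ} (T : Fin K → List α) (S : List α) : ℕ :=
  sSup {n : ℕ | ∃ s : List α, s <:+ S ∧ s.length = n ∧ (s = [] ∨ 2 ≤ (Epos T s).ncard)}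

lemma epos_finite {α : Type*} {K : ℕ} (T : Fin K → List α) (x : List α) :
    (Epos T x).Finite := by
  apply Set.Finite.subset
    (Set.finite_iUnion (fun i : Fin K =>
      ((Set.finite_singleton i).prod (Set.finite_Iic (T i).length))))
  intro p hp
  exact Set.mem_iUnion.2 ⟨p.1, Set.mem_prod.2 ⟨rfl, hp.2.1⟩⟩

lemma drop_take_step {α : Type*} (L w : List α) (a : α) (j : ℕ)
    (hw : w.length + 1 ≤ j)
    (h : (L.take j).drop (j - (w.length + 1)) = w ++ [a]) :
    (L.take (j - 1)).drop (j - 1 - w.length) = w := by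
  have h0 : (L.take j).take (j - 1) = L.take (j - 1) := by
    rw [List.take_take]; congr 1; omega
  have e1 : j - 1 - w.length = j - (w.length + 1) := by omega
  have e2 : j - 1 - (j - (w.length + 1)) = w.length := by omega
  rw [← h0, e1, List.drop_take, h, e2]
  exact List.take_left

lemma epos_map {α : Type*} {K : ℕ} (T' : Fin K → List α) (a : α) (k : Fin K)
    (w : List α) (p : Fin K × ℕ)
    (hp : p ∈ Epos (Function.update T' k (T' k ++ [a])) (w ++ [a])) :
    (p.1, p.2 - 1) ∈ Epos T' w := by
  obtain ⟨h1, h2, h3⟩ := hp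
  simp only [List.length_append, List.length_singleton] at h1 h3
  by_cases hik : p.1 = k
  · rw [hik, Function.update_self] at h2 h3
    simp only [List.length_append, List.length_singleton] at h2
    refine ⟨by omega, by simp [hik]; omega, ?_⟩
    rw [hik]
    have := drop_take_step (T' k ++ [a]) w a p.2 h1 h3
    rwa [List.take_append_of_le_length (by omega)] at this
  · rw [Function.update_of_ne hik] at h2 h3
    exact ⟨by omega, by simp [Function.update_of_ne hik]; omega,
      drop_take_step (T' p.1) w a p.2 h1 h3⟩

/-- the longest repeating suffix grows by at most one character
per appended character. -/
theorem lrs_grows_by_at_most_one {α : Type*} {K : ℕ}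
    (T' : Fin K → List α) (a : α) (k : Fin K)
    (T : Fin K → List α) (hT : T = Function.update T' k (T' k ++ [a])) :
    (∀ w : List α, w ≠ [] → w ++ [a] <:+ T' k ++ [a] →
        2 ≤ (Epos T (w ++ [a])).ncard →
          w <:+ T' k ∧ 2 ≤ (Epos T' w).ncard) ∧
    lrsLen T (T' k ++ [a]) ≤ lrsLen T' (T' k) + 1 := by
  subst hT
  have part1 : ∀ w : List α, w ≠ [] → w ++ [a] <:+ T' k ++ [a] →
      2 ≤ (Epos (Function.update T' k (T' k ++ [a])) (w ++ [a])).ncard →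
        w <:+ T' k ∧ 2 ≤ (Epos T' w).ncard := by
    intro w hw hsuf hcard
    constructor
    · obtain ⟨t, ht⟩ := hsuf
      rw [← List.append_assoc] at ht
      exact ⟨t, (List.append_left_inj [a]).1 ht⟩
    · set E := Epos (Function.update T' k (T' k ++ [a])) (w ++ [a]) with hE
      have hinj : Set.InjOn (fun p : Fin K × ℕ => (p.1, p.2 - 1)) E := by
        intro p hp q hq h
        have hp1 : (w ++ [a]).length ≤ p.2 := hp.1
        have hq1 : (w ++ [a]).length ≤ q.2 := hq.1
        simp only [List.length_append, List.length_singleton] at hp1 hq1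
        simp only [Prod.mk.injEq] at h
        exact Prod.ext h.1 (by omega)
      have himg : (fun p : Fin K × ℕ => (p.1, p.2 - 1)) '' E ⊆ Epos T' w := by
        rintro q ⟨p, hp, rfl⟩
        exact epos_map T' a k w p hp
      calc 2 ≤ E.ncard := hcard
        _ = ((fun p : Fin K × ℕ => (p.1, p.2 - 1)) '' E).ncard :=
            (Set.ncard_image_of_injOn hinj).symm
        _ ≤ (Epos T' w).ncard := Set.ncard_le_ncard himg (epos_finite T' w)
  refine ⟨part1, ?_⟩
  have hne : {n : ℕ | ∃ s : List α, s <:+ T' k ++ [a] ∧ s.length = n ∧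
      (s = [] ∨ 2 ≤ (Epos (Function.update T' k (T' k ++ [a])) s).ncard)}.Nonempty :=
    ⟨0, [], List.nil_suffix, rfl, Or.inl rfl⟩
  apply csSup_le hne
  intro n hn
  obtain ⟨s, hsuf, hlen, hc⟩ := hn
  rcases eq_or_ne s [] with hs | hs
  · subst hs; simp at hlen; omega
  have hc2 : 2 ≤ (Epos (Function.update T' k (T' k ++ [a])) s).ncard := hc.resolve_left hs
  obtain ⟨t, ht⟩ := hsuf
  have hts : t.length ≤ (T' k).length := by
    have h1 := congrArg List.length ht
    have h2 : 1 ≤ s.length := List.length_pos_iff.2 hs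
    simp only [List.length_append, List.length_singleton] at h1
    omega
  set w := (T' k).drop t.length with hwdef
  have hsw : s = w ++ [a] := by
    have h1 : s = (T' k ++ [a]).drop t.length := by
      have := congrArg (List.drop t.length) ht
      rwa [List.drop_left] at this
    rw [h1, List.drop_append_of_le_length hts]
  rcases eq_or_ne w [] with hw0 | hw0
  · have : n = 1 := by rw [← hlen, hsw, hw0]; simp
    omega
  · have hsuf' : w ++ [a] <:+ T' k ++ [a] := ⟨t, by rw [← hsw]; exact ht⟩
    obtain ⟨hwsuf, hwcard⟩ := part1 w hw0 hsuf' (by rw [← hsw]; exact hc2)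
    have hbdd : BddAbove {n : ℕ | ∃ s : List α, s <:+ T' k ∧ s.length = n ∧
        (s = [] ∨ 2 ≤ (Epos T' s).ncard)} := by
      refine ⟨(T' k).length, ?_⟩
      rintro m ⟨s', hs', hlen', _⟩
      exact hlen' ▸ hs'.length_le
    have hle : w.length ≤ lrsLen T' (T' k) :=
      le_csSup hbdd ⟨w, hwsuf, rfl, Or.inr hwcard⟩
    have hn1 : n = w.length + 1 := by rw [← hlen, hsw]; simp
    omega
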